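/- Let G be a finite simple connected graph with minimum degree δ ≥ 2 that is not isomorphic to a cycle C_n. Then AG(G) > √2·ABC(G). -/

import Mathlib

open SimpleGraph

/-- The degree of a vertex, as a natural number (classical, to avoid decidability assumptions). -/
noncomputable def ndeg {V : Type*} [Fintype V] (G : SimpleGraph V) (v : V) : ℕ :=
  letI := Classical.decRel G.Adj
  G.degree v

/-- The degree of a vertex, as a real number. -/
noncomputable def deg {V : Type*} [Fintype V] (G : SimpleGraph V) (v : V) : ℝ :=
  (ndeg G v : ℝ)

/-- For a symmetric function `f`, `edgeSum G f = Σ_{uv ∈ E(G)} f (d_u) (d_v)`: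
each unordered edge is counted twice in the double sum, hence the factor `1/2`. -/
noncomputable def edgeSum {V : Type*} [Fintype V] (G : SimpleGraph V) (f : ℝ → ℝ → ℝ) : ℝ :=
  letI := Classical.decRel G.Adj
  (1 / 2) * ∑ u : V, ∑ w : V, if G.Adj u w then f (deg G u) (deg G w) else 0

/-- The arithmetic-geometric index `AG(G) = Σ_{uv ∈ E(G)} (1/2)(√(d_u/d_v) + √(d_v/d_u))`. -/
noncomputable def AG {V : Type*} [Fintype V] (G : SimpleGraph V) : ℝ :=
  edgeSum G (fun x y => (Real.sqrt (x / y) + Real.sqrt (y / x)) / 2)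

/-- The first geometric-arithmetic index `GA(G) = Σ_{uv ∈ E(G)} 2√(d_u d_v)/(d_u + d_v)`. -/
noncomputable def GA {V : Type*} [Fintype V] (G : SimpleGraph V) : ℝ :=
  edgeSum G (fun x y => 2 * Real.sqrt (x * y) / (x + y))

/-- The forgotten index `F(G) = Σ_{uv ∈ E(G)} (d_u² + d_v²)`. -/
noncomputable def forgottenIndex {V : Type*} [Fintype V] (G : SimpleGraph V) : ℝ :=
  edgeSum G (fun x y => x ^ 2 + y ^ 2)

/-- The first Zagreb index `M₁(G) = Σ_{uv ∈ E(G)} (d_u + d_v)`. -/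
noncomputable def M1 {V : Type*} [Fintype V] (G : SimpleGraph V) : ℝ :=
  edgeSum G (fun x y => x + y)

/-- The second Zagreb index `M₂(G) = Σ_{uv ∈ E(G)} d_u d_v`. -/
noncomputable def M2 {V : Type*} [Fintype V] (G : SimpleGraph V) : ℝ :=
  edgeSum G (fun x y => x * y)

/-- The symmetric division deg index `SDD(G) = Σ_{uv ∈ E(G)} (d_u/d_v + d_v/d_u)`. -/
noncomputable def SDD {V : Type*} [Fintype V] (G : SimpleGraph V) : ℝ :=
  edgeSum G (fun x y => x / y + y / x)

/-- The atom-bond connectivity index `ABC(G) = Σ_{uv ∈ E(G)} √((d_u + d_v − 2)/(d_u d_v))`. -/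
noncomputable def ABC {V : Type*} [Fintype V] (G : SimpleGraph V) : ℝ :=
  edgeSum G (fun x y => Real.sqrt ((x + y - 2) / (x * y)))

/-- `G` is `(s,r)`-semiregular: its vertex set is the disjoint union of two nonempty sets,
all vertices of the first having degree `s` and all vertices of the second degree `r`. -/
def IsSemiregular {V : Type*} [Fintype V] (G : SimpleGraph V) (s r : ℕ) : Prop :=
  ∃ V₁ V₂ : Set V, V₁.Nonempty ∧ V₂.Nonempty ∧ Disjoint V₁ V₂ ∧ V₁ ∪ V₂ = Set.univ ∧
    (∀ v ∈ V₁, ndeg G v = s) ∧ (∀ v ∈ V₂, ndeg G v = r)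


lemma sqrt_sum_eq {x y : ℝ} (hx : 0 < x) (hy : 0 < y) :
    Real.sqrt (x / y) + Real.sqrt (y / x) = (x + y) / Real.sqrt (x * y) := by
  have hsx : Real.sqrt x ≠ 0 := by positivity
  have hsy : Real.sqrt y ≠ 0 := by positivity
  rw [Real.sqrt_div hx.le, Real.sqrt_div hy.le, Real.sqrt_mul hx.le]
  field_simp
  rw [← Real.sq_sqrt hx.le, ← Real.sq_sqrt hy.le]
  ring_nf
  rw [Real.sqrt_sq (Real.sqrt_nonneg x), Real.sqrt_sq (Real.sqrt_nonneg y)]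

lemma key_le {x y : ℝ} (hx : 2 ≤ x) (hy : 2 ≤ y) :
    Real.sqrt 2 * Real.sqrt ((x + y - 2) / (x * y)) ≤ (Real.sqrt (x / y) + Real.sqrt (y / x)) / 2 := by
  have hx0 : (0:ℝ) < x := by linarith
  have hy0 : (0:ℝ) < y := by linarith
  have hxy : (0:ℝ) < Real.sqrt (x * y) := Real.sqrt_pos.2 (mul_pos hx0 hy0)
  rw [sqrt_sum_eq hx0 hy0, Real.sqrt_div (by linarith)]
  rw [mul_div_assoc', ← Real.sqrt_mul (by norm_num), div_div]
  rw [div_le_div_iff₀ (by positivity) (by positivity)]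
  have h1 : Real.sqrt (2 * (x + y - 2)) ≤ (x + y) / 2 := by
    have := Real.sqrt_le_sqrt (show 2 * (x + y - 2) ≤ ((x+y)/2)^2 by nlinarith)
    rwa [Real.sqrt_sq (by linarith)] at this
  nlinarith [h1, hxy.le, Real.sqrt_nonneg (2*(x+y-2))]

lemma key_lt {x y : ℝ} (hx : 2 ≤ x) (hy : 2 ≤ y) (hs : 4 < x + y) :
    Real.sqrt 2 * Real.sqrt ((x + y - 2) / (x * y)) < (Real.sqrt (x / y) + Real.sqrt (y / x)) / 2 := by
  have hx0 : (0:ℝ) < x := by linarith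
  have hy0 : (0:ℝ) < y := by linarith
  have hxy : (0:ℝ) < Real.sqrt (x * y) := Real.sqrt_pos.2 (mul_pos hx0 hy0)
  rw [sqrt_sum_eq hx0 hy0, Real.sqrt_div (by linarith)]
  rw [mul_div_assoc', ← Real.sqrt_mul (by norm_num), div_div]
  rw [div_lt_div_iff₀ (by positivity) (by positivity)]
  have h1 : Real.sqrt (2 * (x + y - 2)) < (x + y) / 2 := by
    have := Real.sqrt_lt_sqrt (by nlinarith) (show 2 * (x + y - 2) < ((x+y)/2)^2 by nlinarith)
    rwa [Real.sqrt_sq (by linarith)] at this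
  nlinarith [h1, hxy, Real.sqrt_nonneg (2*(x+y-2))]

lemma exists_cycle_iso {V : Type*} [Fintype V] (G : SimpleGraph V) (hG : G.Connected)
    (h2 : ∀ v, ndeg G v = 2) : ∃ n, Nonempty (G ≃g cycleGraph n) := by
  classical
  letI : DecidableRel G.Adj := Classical.decRel G.Adj
  have hdeg : ∀ v, (G.neighborFinset v).card = 2 := fun v => h2 v
  -- the "other neighbor" function
  have exother : ∀ c p : V, G.Adj c p → ∃ q, G.Adj c q ∧ q ≠ p := by
    intro c p h
    have hp : p ∈ G.neighborFinset c := by simpa using h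
    have hpos : 0 < ((G.neighborFinset c).erase p).card := by
      rw [Finset.card_erase_of_mem hp, hdeg]; norm_num
    obtain ⟨q, hq⟩ := Finset.card_pos.1 hpos
    exact ⟨q, by simpa using (Finset.mem_erase.1 hq).2, (Finset.mem_erase.1 hq).1⟩
  set other : V → V → V := fun p c =>
    if h : ∃ q, G.Adj c q ∧ q ≠ p then h.choose else c with hother
  have other_adj : ∀ p c, G.Adj c p → G.Adj c (other p c) ∧ other p c ≠ p := by
    intro p c h
    have he := exother c p h
    simp only [hother, dif_pos he]
    exact he.choose_spec
  have other_uniq : ∀ p c q, G.Adj c p → G.Adj c q → q ≠ p → q = other p c := by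
    intro p c q hp hq hne'
    have ho := other_adj p c hp
    have hsub : ({p, other p c} : Finset V) ⊆ G.neighborFinset c := by
      intro x hx
      rcases Finset.mem_insert.1 hx with rfl | hx
      · simpa using hp
      · rw [Finset.mem_singleton] at hx; subst hx; simpa using ho.1
    have hc2 : ({p, other p c} : Finset V).card = 2 := Finset.card_pair (Ne.symm ho.2)
    have hEq : G.neighborFinset c = {p, other p c} :=
      (Finset.eq_of_subset_of_card_le hsub (by rw [hdeg c, hc2])).symm
    have hq' : q ∈ G.neighborFinset c := by simpa using hq
    rw [hEq] at hq'
    rcases Finset.mem_insert.1 hq' with rfl | hq'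
    · exact absurd rfl hne'
    · simpa using hq'
  have two_nbrs : ∀ c p q r, G.Adj c p → G.Adj c q → p ≠ q → G.Adj c r → r = p ∨ r = q := by
    intro c p q r hp hq hpq hr
    by_cases h : r = p
    · exact Or.inl h
    · right
      rw [other_uniq p c r hp hr h, other_uniq p c q hp hq (Ne.symm hpq)]
  -- initial data
  obtain ⟨v0⟩ := hG.nonempty
  have hpos0 : 0 < (G.neighborFinset v0).card := by rw [hdeg]; norm_num
  obtain ⟨a, ha⟩ := Finset.card_pos.1 hpos0
  have hav0 : G.Adj v0 a := by simpa using ha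
  -- the walk
  set g : ℕ → V × V :=
    fun n => Nat.rec (v0, a) (fun _ pr => (pr.2, other pr.1 pr.2)) n with hgdef
  set f : ℕ → V := fun n => (g n).1 with hfdef
  have hgs : ∀ n, g (n + 1) = ((g n).2, other (g n).1 (g n).2) := fun n => rfl
  have hf1 : ∀ n, f (n + 1) = (g n).2 := fun n => rfl
  have hf2 : ∀ n, f (n + 2) = other (f n) (f (n + 1)) := fun n => rfl
  have hgpair : ∀ n, g n = (f n, f (n + 1)) := fun n => Prod.ext rfl (hf1 n).symm
  have hadj : ∀ n, G.Adj (f n) (f (n + 1)) := by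
    intro n; induction n with
    | zero => exact hav0
    | succ k ih =>
      rw [hf2 k]
      exact (other_adj (f k) (f (k + 1)) ih.symm).1
  have hne2 : ∀ n, f (n + 2) ≠ f n := by
    intro n
    rw [hf2 n]
    exact (other_adj (f n) (f (n + 1)) (hadj n).symm).2
  -- backward determinism
  have gback : ∀ n k, g (n + 1) = g (k + 1) → g n = g k := by
    intro n k h
    rw [hgs n, hgs k] at h
    have hc : f (n + 1) = f (k + 1) := congrArg Prod.fst h
    have h2' : other (f n) (f (n + 1)) = other (f k) (f (k + 1)) := congrArg Prod.snd h
    have heq : f n = f k := by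
      by_contra hne'
      have hpk : G.Adj (f (n + 1)) (f k) := hc ▸ (hadj k).symm
      have h3 : f n = other (f k) (f (n + 1)) :=
        other_uniq (f k) (f (n + 1)) (f n) hpk (hadj n).symm hne'
      have h4 : f n = f (n + 2) := by
        rw [h3, hf2 n, h2', hc]
      exact hne2 n h4.symm
    rw [hgpair n, hgpair k, heq, hc]
  have hback_iter : ∀ d n k, g (n + d) = g (k + d) → g n = g k := by
    intro d
    induction d with
    | zero => intro n k h; simpa using h
    | succ t ih =>
      intro n k h
      apply ih
      apply gback
      rw [show n + t + 1 = n + (t + 1) by omega, show k + t + 1 = k + (t + 1) by omega]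
      exact h
  -- minimal period
  have hex : ∃ p, 0 < p ∧ g p = g 0 := by
    obtain ⟨x, y, hxy, hgxy⟩ := Finite.exists_ne_map_eq_of_infinite g
    rcases Nat.lt_or_ge x y with h | h
    · refine ⟨y - x, by omega, hback_iter x (y - x) 0 ?_⟩
      rw [show y - x + x = y by omega, Nat.zero_add]
      exact hgxy.symm
    · have h' : y < x := by omega
      refine ⟨x - y, by omega, hback_iter y (x - y) 0 ?_⟩
      rw [show x - y + y = x by omega, Nat.zero_add]
      exact hgxy
  obtain ⟨m, hmpos, hgm, hmin⟩ :
      ∃ m, 0 < m ∧ g m = g 0 ∧ ∀ k, 0 < k → k < m → g k ≠ g 0 := by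
    refine ⟨Nat.find hex, (Nat.find_spec hex).1, (Nat.find_spec hex).2, ?_⟩
    intro k hk hkm hgk
    have hle : Nat.find hex ≤ k := Nat.find_le (show 0 < k ∧ g k = g 0 from ⟨hk, hgk⟩)
    omega
  have hper : ∀ k, g (k + m) = g k := by
    intro k; induction k with
    | zero => simpa using hgm
    | succ t ih => rw [show t + 1 + m = (t + m) + 1 by omega, hgs, hgs, ih]
  have fper : ∀ k, f (k + m) = f k := fun k => congrArg Prod.fst (hper k)
  have fmod : ∀ k, f k = f (k % m) := by
    intro k
    conv_lhs => rw [show k = k % m + m * (k / m) from (Nat.mod_add_div k m).symm]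
    generalize k / m = q
    induction q with
    | zero => simp
    | succ t ih =>
      rw [show k % m + m * (t + 1) = (k % m + m * t) + m by ring, fper]
      exact ih
  have fcong : ∀ x y : ℕ, (m : ℤ) ∣ (x : ℤ) - (y : ℤ) → f x = f y := by
    intro x y hdvd
    have : y ≡ x [MOD m] := (Nat.modEq_iff_dvd).2 hdvd
    rw [fmod x, fmod y, this]
  have hm3 : 3 ≤ m := by
    by_contra h
    interval_cases m
    · exact (hadj 0).ne (congrArg Prod.fst hgm).symm
    · exact hne2 0 (congrArg Prod.fst hgm)
  -- neighbors of f k are exactly f (k+1) and f (k + (m-1))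
  have hnbr2 : ∀ k, G.Adj (f k) (f (k + (m - 1))) := by
    intro k
    have h := hadj (k + (m - 1))
    rw [show k + (m - 1) + 1 = k + m by omega, fper k] at h
    exact h.symm
  have hnbrne : ∀ k, f (k + 1) ≠ f (k + (m - 1)) := by
    intro k h
    apply hne2 (k + (m - 1))
    rw [show k + (m - 1) + 2 = (k + 1) + m by omega, fper (k + 1), h]
  have hnbrs : ∀ k q, G.Adj (f k) q → q = f (k + 1) ∨ q = f (k + (m - 1)) :=
    fun k q h => two_nbrs (f k) _ _ q (hadj k) (hnbr2 k) (hnbrne k) h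
  -- injectivity on [0, m)
  have hne_lt : ∀ i j, i < j → j < m → f i ≠ f j := by
    intro i j hij hjm hfij
    rcases hnbrs i (f (j + 1)) (by rw [hfij]; exact hadj j) with hA | hB
    · -- case A : g j = g i, contradiction with minimality
      have hji : g j = g i := by
        rw [hgpair j, hgpair i, hfij, hA]
      have h0 : g (j - i) = g 0 := by
        refine hback_iter i (j - i) 0 ?_
        rw [show j - i + i = j by omega, Nat.zero_add]
        exact hji
      exact hmin (j - i) (by omega) (by omega) h0
    · -- case B : reflection
      have refl : ∀ t, f (j + t) = f (i + (m - 1) * t) := by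
        have main : ∀ t, f (j + t) = f (i + (m - 1) * t) ∧
            f (j + t + 1) = f (i + (m - 1) * (t + 1)) := by
          intro t; induction t with
          | zero =>
            constructor
            · simpa using hfij.symm
            · simpa using hB
          | succ t ih =>
            have hstep : G.Adj (f (i + (m - 1) * (t + 1))) (f (j + t + 2)) := by
              rw [← ih.2]; exact hadj (j + t + 1)
            have hgoal : f (j + t + 2) = f (i + (m - 1) * (t + 1) + (m - 1)) := by
              rcases hnbrs (i + (m - 1) * (t + 1)) _ hstep with h | h
              · exfalso
                have hk1 : f (i + (m - 1) * (t + 1) + 1) = f (i + (m - 1) * t) :=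
                  fcong (i + (m - 1) * (t + 1) + 1) (i + (m - 1) * t)
                    ⟨1, by push_cast [Nat.cast_sub (show 1 ≤ m by omega)]; ring⟩
                rw [hk1, ← ih.1] at h
                exact hne2 (j + t) h
              · exact h
            constructor
            · have := ih.2
              rw [show j + t + 1 = j + (t + 1) by omega] at this
              exact this
            · rw [show j + (t + 1) + 1 = j + t + 2 by omega,
                  show i + (m - 1) * (t + 1 + 1) = i + (m - 1) * (t + 1) + (m - 1) by ring]
              exact hgoal
        exact fun t => (main t).1
      -- derive a contradiction using parity
      rcases Nat.even_or_odd (j - i) with ⟨s, hs⟩ | ⟨s, hs⟩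
      · set t := m - s - 1 with ht
        have h2t : 2 * t + (j - i) + 2 = 2 * m := by omega
        have e2 : f (i + (m - 1) * t) = f (j + t + 2) := by
          refine fcong (i + (m - 1) * t) (j + t + 2) ⟨(t : ℤ) - 2, ?_⟩
          have h2tz : 2 * (t : ℤ) + ((j : ℤ) - (i : ℤ)) + 2 = 2 * (m : ℤ) := by omega
          push_cast [Nat.cast_sub (show 1 ≤ m by omega)]
          linear_combination -1 * h2tz
        exact hne2 (j + t) ((refl t).trans e2).symm
      · set t := m - s - 1 with ht
        have h2t : 2 * t + (j - i) + 1 = 2 * m := by omega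
        have e2 : f (i + (m - 1) * t) = f (j + t + 1) := by
          refine fcong (i + (m - 1) * t) (j + t + 1) ⟨(t : ℤ) - 2, ?_⟩
          have h2tz : 2 * (t : ℤ) + ((j : ℤ) - (i : ℤ)) + 1 = 2 * (m : ℤ) := by omega
          push_cast [Nat.cast_sub (show 1 ≤ m by omega)]
          linear_combination -1 * h2tz
        exact (hadj (j + t)).ne ((refl t).trans e2)
  have hinj : ∀ i j, i < m → j < m → f i = f j → i = j := by
    intro i j him hjm hf
    rcases lt_trichotomy i j with h | h | h
    · exact absurd hf (hne_lt i j h hjm)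
    · exact h
    · exact absurd hf.symm (hne_lt j i h him)
  -- surjectivity
  have hsurj : ∀ v : V, ∃ k, f k = v := by
    have main : ∀ (u v' : V), G.Walk u v' → (∃ k, f k = u) → ∃ k, f k = v' := by
      intro u v' w
      induction w with
      | nil => exact id
      | @cons u b v' hadj' w' ih =>
        rintro ⟨k, rfl⟩
        apply ih
        rcases hnbrs k b hadj' with h | h
        · exact ⟨k + 1, h.symm⟩
        · exact ⟨k + (m - 1), h.symm⟩
    intro v
    obtain ⟨w⟩ := hG.preconnected (f 0) v
    exact main (f 0) v w ⟨0, rfl⟩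
  -- assemble the isomorphism
  obtain ⟨M, rfl⟩ : ∃ M, m = M + 2 := ⟨m - 2, by omega⟩
  refine ⟨M + 2, ?_⟩
  set f' : Fin (M + 2) → V := fun k => f k.val with hf'
  have hbij : Function.Bijective f' := by
    constructor
    · intro x y hxy
      exact Fin.ext (hinj x.val y.val x.2 y.2 hxy)
    · intro v
      obtain ⟨k, hk⟩ := hsurj v
      exact ⟨⟨k % (M + 2), Nat.mod_lt _ hmpos⟩, ((fmod k).symm.trans hk)⟩
  have key : ∀ u v : Fin (M + 2), G.Adj (f' u) (f' v) ↔ (cycleGraph (M + 2)).Adj u v := by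
    intro u v
    rw [cycleGraph_adj]
    constructor
    · intro h
      rcases hnbrs u.val (f' v) h with h' | h'
      · right
        have hv : v.val = (u.val + 1) % (M + 2) := by
          refine hinj v.val ((u.val + 1) % (M + 2)) v.2 (Nat.mod_lt _ (by omega)) ?_
          rw [← fmod (u.val + 1)]
          exact h'
        have hv1 : v = u + 1 := by
          apply Fin.ext
          rw [hv, Fin.val_add, Fin.val_one]
        rw [hv1]
        exact add_sub_cancel_left u 1
      · left
        have hv : v.val = (u.val + (M + 2 - 1)) % (M + 2) := by
          refine hinj v.val ((u.val + (M + 2 - 1)) % (M + 2)) v.2 (Nat.mod_lt _ (by omega)) ?_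
          rw [← fmod (u.val + (M + 2 - 1))]
          exact h'
        have hu1 : u = v + 1 := by
          apply Fin.ext
          rw [Fin.val_add, Fin.val_one, hv, Nat.mod_add_mod,
            show u.val + (M + 2 - 1) + 1 = u.val + (M + 2) by omega,
            Nat.add_mod_right, Nat.mod_eq_of_lt u.2]
        rw [hu1]
        exact add_sub_cancel_left v 1
    · intro h
      rcases h with h | h
      · have hu : u = v + 1 := by rw [← h]; abel
        have huv : u.val = (v.val + 1) % (M + 2) := by
          rw [hu, Fin.val_add, Fin.val_one]
        have h1 : f' u = f (v.val + 1) := by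
          show f u.val = f (v.val + 1)
          rw [huv]
          exact (fmod (v.val + 1)).symm
        rw [h1]
        exact (hadj v.val).symm
      · have hv : v = u + 1 := by rw [← h]; abel
        have hvu : v.val = (u.val + 1) % (M + 2) := by
          rw [hv, Fin.val_add, Fin.val_one]
        have h1 : f' v = f (u.val + 1) := by
          show f v.val = f (u.val + 1)
          rw [hvu]
          exact (fmod (u.val + 1)).symm
        rw [h1]
        exact hadj u.val
  exact ⟨(RelIso.mk (Equiv.ofBijective f' hbij) (fun {u v} => key u v)).symm⟩

/-- Consequence of Theorem 9 noted in the paper: if `δ ≥ 2` and `G` is not a cycle, then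
`AG(G) > √2 · ABC(G)`. -/
theorem stmt15 {V : Type*} [Fintype V] (G : SimpleGraph V) (hG : G.Connected)
    (hδ : ∀ v : V, 2 ≤ ndeg G v)
    (hnotcycle : ∀ n : ℕ, IsEmpty (G ≃g SimpleGraph.cycleGraph n)) :
    Real.sqrt 2 * ABC G < AG G := by
  letI : DecidableRel G.Adj := Classical.decRel G.Adj
  have hdeg2 : ∀ u : V, (2:ℝ) ≤ deg G u := by
    intro u
    have := hδ u
    simp only [deg]
    exact_mod_cast this
  obtain ⟨v, hv3⟩ : ∃ v, 3 ≤ ndeg G v := by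
    by_contra h
    push_neg at h
    have h2 : ∀ v, ndeg G v = 2 := fun v => le_antisymm (by have := h v; omega) (hδ v)
    obtain ⟨n, ⟨iso⟩⟩ := exists_cycle_iso G hG h2
    exact (hnotcycle n).false iso
  have hv3' : (3:ℝ) ≤ deg G v := by
    simp only [deg]; exact_mod_cast hv3
  obtain ⟨w0, hw0⟩ : ∃ w, G.Adj v w := by
    have hpos : 0 < (G.neighborFinset v).card := by
      have he : (G.neighborFinset v).card = ndeg G v := rfl
      omega
    obtain ⟨w, hw⟩ := Finset.card_pos.1 hpos
    exact ⟨w, by simpa using hw⟩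
  have main : ∑ u : V, ∑ w : V,
        (if G.Adj u w then
          Real.sqrt 2 * Real.sqrt ((deg G u + deg G w - 2) / (deg G u * deg G w)) else 0)
      < ∑ u : V, ∑ w : V,
        (if G.Adj u w then
          (Real.sqrt (deg G u / deg G w) + Real.sqrt (deg G w / deg G u)) / 2 else 0) := by
    apply Finset.sum_lt_sum
    · intro u _
      apply Finset.sum_le_sum
      intro w _
      split
      · exact key_le (hdeg2 u) (hdeg2 w)
      · exact le_rfl
    · refine ⟨v, Finset.mem_univ v, ?_⟩
      apply Finset.sum_lt_sum
      · intro w _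
        split
        · exact key_le (hdeg2 v) (hdeg2 w)
        · exact le_rfl
      · refine ⟨w0, Finset.mem_univ w0, ?_⟩
        rw [if_pos hw0, if_pos hw0]
        exact key_lt (hdeg2 v) (hdeg2 w0) (by linarith [hdeg2 w0])
  simp only [ABC, AG, edgeSum]
  rw [mul_left_comm]
  refine mul_lt_mul_of_pos_left ?_ (by norm_num : (0:ℝ) < 1/2)
  calc Real.sqrt 2 * ∑ u : V, ∑ w : V,
        (if G.Adj u w then Real.sqrt ((deg G u + deg G w - 2) / (deg G u * deg G w)) else 0)
      = ∑ u : V, ∑ w : V,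
        (if G.Adj u w then
          Real.sqrt 2 * Real.sqrt ((deg G u + deg G w - 2) / (deg G u * deg G w)) else 0) := by
        simp only [Finset.mul_sum, mul_ite, mul_zero]
    _ < _ := main
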